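/- Let n ≥ 1, let G be a simple graph on Fin n with Laplacian matrix L (over ℝ) and degree vector d (d_i = degree of vertex i). If D is a real n×n matrix with zero diagonal such that L·D + 2·I = (2·1 − d)·1ᵀ, then G is a tree and D is the distance matrix of G, i.e., D i j = dist_G(i, j) for all vertices i, j. -/

import Mathlib

open Matrix Finset BigOperators

variable {V : Type*}

lemma tree_path_length {G : SimpleGraph V} (hT : G.IsTree) {i j : V}
    (p : G.Walk i j) (hp : p.IsPath) : p.length = G.dist i j := by
  obtain ⟨q, hq, hql⟩ := hT.isConnected.exists_path_of_dist i j
  rw [(hT.existsUnique_path i j).unique hp hq, hql]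

lemma tree_step {G : SimpleGraph V} (hT : G.IsTree) {i j : V} (hij : i ≠ j) :
    ∃ k, G.Adj i k ∧ G.dist k j + 1 = G.dist i j ∧
      ∀ k', G.Adj i k' → k' ≠ k → G.dist k' j = G.dist i j + 1 := by
  classical
  obtain ⟨p, hp, hpl⟩ := hT.isConnected.exists_path_of_dist i j
  obtain ⟨k, hadj, q, rfl⟩ := p.exists_eq_cons_of_ne hij
  rw [SimpleGraph.Walk.cons_isPath_iff] at hp
  refine ⟨k, hadj, ?_, ?_⟩
  · rw [← hpl, SimpleGraph.Walk.length_cons, tree_path_length hT q hp.1]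
  · intro k' hadj' hne
    have hknots : k' ∉ (SimpleGraph.Walk.cons hadj q).support := by
      intro hmem
      rw [SimpleGraph.Walk.support_cons, List.mem_cons] at hmem
      rcases hmem with rfl | hmem
      · exact G.irrefl hadj'
      · have h1 : (SimpleGraph.Walk.cons hadj' SimpleGraph.Walk.nil).IsPath :=
          (SimpleGraph.Path.singleton hadj').2
        have h2 : (SimpleGraph.Walk.cons hadj (q.takeUntil k' hmem)).IsPath := by
          rw [SimpleGraph.Walk.cons_isPath_iff]
          exact ⟨hp.1.takeUntil hmem, fun hi => hp.2 (q.support_takeUntil_subset hmem hi)⟩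
        have := (hT.existsUnique_path i k').unique h1 h2
        have hs := congrArg SimpleGraph.Walk.support this
        rw [SimpleGraph.Walk.support_cons, SimpleGraph.Walk.support_cons,
          SimpleGraph.Walk.support_nil, (q.takeUntil k' hmem).support_eq_cons] at hs
        simp only [List.cons.injEq] at hs
        exact hne hs.2.1
    have hpath : (SimpleGraph.Walk.cons hadj'.symm (SimpleGraph.Walk.cons hadj q)).IsPath := by
      rw [SimpleGraph.Walk.cons_isPath_iff]
      exact ⟨by rw [SimpleGraph.Walk.cons_isPath_iff]; exact hp, hknots⟩
    have := tree_path_length hT _ hpath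
    rw [SimpleGraph.Walk.length_cons] at this
    omega

lemma conn_card_le [Fintype V] [DecidableEq V] {G : SimpleGraph V} [DecidableRel G.Adj]
    (hc : G.Connected) : Fintype.card V ≤ G.edgeFinset.card + 1 := by
  classical
  obtain ⟨v₀⟩ := hc.nonempty
  have hstep : ∀ w : V, ∃ x, w ≠ v₀ → G.Adj w x ∧ G.dist x v₀ + 1 = G.dist w v₀ := by
    intro w
    by_cases hw : w = v₀
    · exact ⟨v₀, fun h => absurd hw h⟩
    · obtain ⟨p, hp, hpl⟩ := hc.exists_path_of_dist w v₀
      obtain ⟨x, hadj, q, rfl⟩ := p.exists_eq_cons_of_ne hw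
      refine ⟨x, fun _ => ⟨hadj, ?_⟩⟩
      have h1 : G.dist x v₀ ≤ q.length := SimpleGraph.dist_le q
      have h2 : G.dist w v₀ ≤ G.dist x v₀ + 1 := by
        obtain ⟨r, hr⟩ := (hc.preconnected x v₀).exists_walk_length_eq_dist
        have := SimpleGraph.dist_le (SimpleGraph.Walk.cons hadj r)
        rw [SimpleGraph.Walk.length_cons, hr] at this
        omega
      rw [SimpleGraph.Walk.length_cons] at hpl
      omega
  choose f hf using hstep
  have hinj : Set.InjOn (fun w => s(w, f w)) (Finset.univ.erase v₀ : Finset V) := by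
    intro w1 h1 w2 h2 heq
    rw [Finset.mem_coe, Finset.mem_erase] at h1 h2
    have hw1 := hf w1 h1.1
    have hw2 := hf w2 h2.1
    rw [Sym2.eq_iff] at heq
    rcases heq with ⟨rfl, _⟩ | ⟨h3, h4⟩
    · rfl
    · rw [← h3] at hw2
      rw [h4] at hw1
      omega
  have hmap : ∀ w ∈ Finset.univ.erase v₀, s(w, f w) ∈ G.edgeFinset := by
    intro w hw
    rw [SimpleGraph.mem_edgeFinset, SimpleGraph.mem_edgeSet]
    exact (hf w (Finset.mem_erase.mp hw).1).1
  have := Finset.card_le_card_of_injOn _ hmap hinj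
  rw [Finset.card_erase_of_mem (Finset.mem_univ v₀), Finset.card_univ] at this
  omega

lemma conn_tree [Fintype V] [DecidableEq V] {G : SimpleGraph V} [DecidableRel G.Adj]
    (hc : G.Connected) (hcard : G.edgeFinset.card + 1 = Fintype.card V) : G.IsTree := by
  classical
  refine ⟨hc, ?_⟩
  by_contra hac
  rw [SimpleGraph.isAcyclic_iff_forall_edge_isBridge] at hac
  push_neg at hac
  obtain ⟨e, he, hnb⟩ := hac
  induction e with
  | h v w =>
  have hadj : G.Adj v w := he
  have hreach : (G \ SimpleGraph.fromEdgeSet {s(v, w)}).Reachable v w := by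
    rw [SimpleGraph.isBridge_iff] at hnb
    tauto
  set G' := G \ SimpleGraph.fromEdgeSet {s(v, w)} with hG'
  haveI : DecidableRel G'.Adj := Classical.decRel _
  have hedge : ∀ {a b : V}, G.Adj a b → G'.Reachable a b := by
    intro a b hab
    by_cases hab' : s(a, b) = s(v, w)
    · rw [Sym2.eq_iff] at hab'
      rcases hab' with ⟨rfl, rfl⟩ | ⟨rfl, rfl⟩
      · exact hreach
      · exact hreach.symm
    · refine SimpleGraph.Adj.reachable ?_
      rw [hG']
      simp only [SimpleGraph.sdiff_adj, SimpleGraph.fromEdgeSet_adj]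
      exact ⟨hab, by tauto⟩
  have hpre : G'.Preconnected := by
    intro a b
    obtain ⟨p⟩ := hc.preconnected a b
    induction p with
    | nil => rfl
    | cons hadj p ih => exact (hedge hadj).trans ih
  have hconn' : G'.Connected := by
    haveI := hc.nonempty
    exact SimpleGraph.Connected.mk hpre
  have hes : G'.edgeSet = G.edgeSet \ {s(v, w)} := by
    rw [hG']
    simp [SimpleGraph.edgeSet_sdiff, SimpleGraph.edgeSet_fromEdgeSet,
      SimpleGraph.edgeSet_sdiff_sdiff_isDiag]
  have hef : G'.edgeFinset = G.edgeFinset \ {s(v, w)} := by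
    ext e
    simp only [SimpleGraph.mem_edgeFinset, Finset.mem_sdiff, Finset.mem_singleton, hes,
      Set.mem_diff, Set.mem_singleton_iff]
  have hcard' : G'.edgeFinset.card + 1 = G.edgeFinset.card := by
    rw [hef, Finset.card_sdiff_of_subset (by simpa using he)]
    have hpos : 0 < G.edgeFinset.card :=
      Finset.card_pos.mpr ⟨s(v,w), by simpa using he⟩
    simp only [Finset.card_singleton]
    omega
  have hle := conn_card_le hconn'
  simp only [SimpleGraph.edgeFinset, ← Set.ncard_eq_toFinset_card'] at hle hcard' hcard
  omega

lemma tree_dist_eq [Fintype V] [DecidableEq V] {G : SimpleGraph V} [DecidableRel G.Adj]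
    (hT : G.IsTree) (i j : V) :
    (G.degree i : ℝ) * (G.dist i j : ℝ) - ∑ k ∈ G.neighborFinset i, (G.dist k j : ℝ)
      + 2 * (if i = j then (1:ℝ) else 0) = 2 - (G.degree i : ℝ) := by
  by_cases hij : i = j
  · subst hij
    have hsum : ∑ k ∈ G.neighborFinset i, (G.dist k i : ℝ) = (G.degree i : ℝ) := by
      rw [show (G.degree i : ℝ) = ∑ _k ∈ G.neighborFinset i, (1:ℝ) by
        rw [← SimpleGraph.card_neighborFinset_eq_degree, Finset.sum_const, nsmul_eq_mul, mul_one]]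
      refine Finset.sum_congr rfl fun k hk => ?_
      rw [SimpleGraph.mem_neighborFinset] at hk
      have : G.dist k i = 1 := SimpleGraph.dist_eq_one_iff_adj.mpr hk.symm
      rw [this]; norm_num
    rw [hsum, if_pos rfl, SimpleGraph.dist_self]
    push_cast
    ring
  · obtain ⟨k₀, hadj, hdist, hother⟩ := tree_step hT hij
    have hk₀ : k₀ ∈ G.neighborFinset i := (SimpleGraph.mem_neighborFinset G i k₀).mpr hadj
    have hsum : ∑ k ∈ G.neighborFinset i, (G.dist k j : ℝ)
        = ((G.dist i j : ℝ) - 1) + ((G.degree i : ℝ) - 1) * ((G.dist i j : ℝ) + 1) := by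
      rw [← Finset.add_sum_erase _ _ hk₀]
      have h1 : (G.dist k₀ j : ℝ) = (G.dist i j : ℝ) - 1 := by
        have := hdist
        push_cast [← this]
        ring
      have h2 : ∑ k ∈ (G.neighborFinset i).erase k₀, (G.dist k j : ℝ)
          = ((G.degree i : ℝ) - 1) * ((G.dist i j : ℝ) + 1) := by
        have hval : ∀ k ∈ (G.neighborFinset i).erase k₀,
            (G.dist k j : ℝ) = (G.dist i j : ℝ) + 1 := by
          intro k hk
          rw [Finset.mem_erase, SimpleGraph.mem_neighborFinset] at hk
          have hh := hother k hk.2 hk.1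
          push_cast [hh]
          ring
        have hdeg : 1 ≤ G.degree i := by
          rw [← SimpleGraph.card_neighborFinset_eq_degree]
          exact Finset.card_pos.mpr ⟨k₀, hk₀⟩
        rw [Finset.sum_congr rfl hval, Finset.sum_const, Finset.card_erase_of_mem hk₀,
          SimpleGraph.card_neighborFinset_eq_degree, nsmul_eq_mul, Nat.cast_sub hdeg]
        push_cast
        ring
      rw [h1, h2]
    rw [hsum, if_neg hij]
    ring

theorem bilinear_identity_tree_and_distance {n : ℕ} (hn : 1 ≤ n)
    (G : SimpleGraph (Fin n)) [DecidableRel G.Adj]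
    (L : Matrix (Fin n) (Fin n) ℝ) (hL : L = G.lapMatrix ℝ)
    (d : Fin n → ℝ) (hd : ∀ i, d i = (G.degree i : ℝ))
    (D : Matrix (Fin n) (Fin n) ℝ) (hDdiag : ∀ i, D i i = 0)
    (h : L * D + (2 : ℝ) • (1 : Matrix (Fin n) (Fin n) ℝ) =
      Matrix.vecMulVec (fun i => 2 - d i) (fun _ => (1 : ℝ))) :
    G.IsTree ∧ ∀ i j, D i j = (G.dist i j : ℝ) := by
  classical
  subst hL
  haveI : NeZero n := ⟨by omega⟩
  have hent : ∀ i j, (∑ k, G.lapMatrix ℝ i k * D k j)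
      + 2 * (if i = j then (1:ℝ) else 0) = 2 - d i := by
    intro i j
    have := congrFun (congrFun h i) j
    simpa [Matrix.add_apply, Matrix.smul_apply, Matrix.mul_apply, Matrix.one_apply,
      Matrix.vecMulVec_apply, smul_eq_mul] using this
  -- column sums of the Laplacian vanish
  have hcol : ∀ k : Fin n, ∑ i, G.lapMatrix ℝ i k = 0 := by
    intro k
    have h0 := congrFun (G.lapMatrix_mulVec_const_eq_zero (R := ℝ)) k
    simp only [Matrix.mulVec, dotProduct, mul_one, Pi.zero_apply] at h0
    rw [← h0]
    exact Finset.sum_congr rfl fun i _ => (G.isSymm_lapMatrix (R := ℝ)).apply k i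
  -- edge count
  have hdegsum : ∑ i, (G.degree i : ℝ) = 2 * n - 2 := by
    have hsum := Finset.sum_congr rfl (fun i (_ : i ∈ Finset.univ) => hent i 0)
    rw [Finset.sum_add_distrib, Finset.sum_comm] at hsum
    have hzero : ∑ k, ∑ i, G.lapMatrix ℝ i k * D k 0 = 0 := by
      refine Finset.sum_eq_zero fun k _ => ?_
      rw [← Finset.sum_mul, hcol, zero_mul]
    rw [hzero, zero_add] at hsum
    simp only [mul_ite, mul_one, mul_zero, Finset.sum_ite_eq', Finset.mem_univ, if_true] at hsum
    have : ∑ i, (2 - d i) = 2 * n - ∑ i, d i := by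
      rw [Finset.sum_sub_distrib]
      simp [Finset.card_univ, mul_comm]
    rw [this] at hsum
    have hdd : ∑ i, d i = ∑ i, (G.degree i : ℝ) := Finset.sum_congr rfl fun i _ => hd i
    rw [hdd] at hsum
    linarith
  have hcard : G.edgeFinset.card + 1 = Fintype.card (Fin n) := by
    have h2 : ((∑ i, G.degree i : ℕ) : ℝ) = 2 * n - 2 := by
      push_cast
      exact hdegsum
    rw [SimpleGraph.sum_degrees_eq_twice_card_edges] at h2
    have : (2 * G.edgeFinset.card + 2 : ℝ) = 2 * n := by push_cast at h2 ⊢; linarith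
    have hnat : 2 * G.edgeFinset.card + 2 = 2 * n := by exact_mod_cast this
    simp only [Fintype.card_fin]
    omega
  -- connectivity
  have hconn : G.Connected := by
    have hpre : G.Preconnected := by
      intro u v
      by_contra hnr
      set x : Fin n → ℝ := fun k => if G.Reachable u k then 1 else 0 with hx
      have hLx : ∀ k, ∑ i, x i * G.lapMatrix ℝ i k = 0 := by
        intro k
        have : ∑ i, x i * G.lapMatrix ℝ i k = (G.lapMatrix ℝ *ᵥ x) k := by
          rw [Matrix.mulVec, dotProduct]
          exact Finset.sum_congr rfl fun i _ => by
            rw [show G.lapMatrix ℝ i k = G.lapMatrix ℝ k i from (G.isSymm_lapMatrix (R := ℝ)).apply k i,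
              mul_comm]
        rw [this, SimpleGraph.lapMatrix_mulVec_apply]
        by_cases hk : G.Reachable u k
        · have hx1 : x k = 1 := by simp [hx, hk]
          have : ∑ m ∈ G.neighborFinset k, x m = (G.degree k : ℝ) := by
            rw [show (G.degree k : ℝ) = ∑ _m ∈ G.neighborFinset k, (1:ℝ) by
              rw [← SimpleGraph.card_neighborFinset_eq_degree, Finset.sum_const, nsmul_eq_mul,
                mul_one]]
            refine Finset.sum_congr rfl fun m hm => ?_
            rw [SimpleGraph.mem_neighborFinset] at hm
            simp [hx, hk.trans hm.reachable]
          rw [this, hx1]; ring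
        · have hx0 : x k = 0 := by simp [hx, hk]
          have : ∑ m ∈ G.neighborFinset k, x m = 0 := by
            refine Finset.sum_eq_zero fun m hm => ?_
            rw [SimpleGraph.mem_neighborFinset] at hm
            have : ¬ G.Reachable u m := fun hr => hk (hr.trans hm.symm.reachable)
            simp [hx, this]
          rw [this, hx0]; ring
      have key : ∀ j, 2 * x j = ∑ i, x i * (2 - d i) := by
        intro j
        have hsum := Finset.sum_congr rfl
          (fun i (_ : i ∈ Finset.univ) => congrArg (x i * ·) (hent i j))
        simp only [mul_add] at hsum
        rw [Finset.sum_add_distrib] at hsum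
        have h1 : ∑ i, x i * ∑ k, G.lapMatrix ℝ i k * D k j = 0 := by
          rw [Finset.sum_congr rfl (fun i _ => Finset.mul_sum _ _ _), Finset.sum_comm]
          refine Finset.sum_eq_zero fun k _ => ?_
          rw [show ∑ i, x i * (G.lapMatrix ℝ i k * D k j)
              = (∑ i, x i * G.lapMatrix ℝ i k) * D k j by rw [Finset.sum_mul]; exact Finset.sum_congr rfl fun _ _ => by ring]
          rw [hLx, zero_mul]
        rw [h1, zero_add] at hsum
        rw [← hsum]
        simp only [mul_ite, mul_one, mul_zero, Finset.sum_ite_eq', Finset.mem_univ, if_true]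
        ring
      have hu := key u
      have hv := key v
      have hxu : x u = 1 := if_pos (SimpleGraph.Reachable.refl u)
      have hxv : x v = 0 := by simp [hx, hnr]
      rw [hxu] at hu; rw [hxv] at hv
      rw [← hu] at hv
      norm_num at hv
    exact SimpleGraph.Connected.mk hpre
  have hT : G.IsTree := conn_tree hconn hcard
  refine ⟨hT, ?_⟩
  intro i j
  -- column difference lies in kernel of Laplacian
  have hker : ∀ j, Matrix.toLin' (G.lapMatrix ℝ)
      (fun i => D i j - (G.dist i j : ℝ)) = 0 := by
    intro j
    rw [Matrix.toLin'_apply]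
    funext k
    have h1 : (G.lapMatrix ℝ *ᵥ fun i => D i j - (G.dist i j : ℝ)) k
        = (∑ i, G.lapMatrix ℝ k i * D i j) - ∑ i, G.lapMatrix ℝ k i * (G.dist i j : ℝ) := by
      simp only [Matrix.mulVec, dotProduct, mul_sub]
      rw [Finset.sum_sub_distrib]
    have h2 : ∑ i, G.lapMatrix ℝ k i * (G.dist i j : ℝ)
        = (G.degree k : ℝ) * (G.dist k j : ℝ) - ∑ m ∈ G.neighborFinset k, (G.dist m j : ℝ) := by
      have := SimpleGraph.lapMatrix_mulVec_apply (R := ℝ) G k (fun i => (G.dist i j : ℝ))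
      simpa [Matrix.mulVec, dotProduct] using this
    have h3 := hent k j
    have h4 := tree_dist_eq hT k j
    rw [h1, h2]
    rw [hd k] at h3
    simp only [Pi.zero_apply]
    linarith
  have := (SimpleGraph.lapMatrix_mulVec_eq_zero_iff_forall_reachable (G := G)
    (x := fun i => D i j - (G.dist i j : ℝ))).mp (by rw [← Matrix.toLin'_apply]; exact hker j) i j (hconn.preconnected i j)
  rw [hDdiag j, SimpleGraph.dist_self] at this
  norm_num at this
  linarith [this]
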